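/- The map Λ ↦ (Λ*, Λ^⊛) from superpartitions to pairs of partitions is injective: two superpartitions Λ and Ω are equal if and only if Λ* = Ω* and Λ^⊛ = Ω^⊛. -/

import Mathlib

/-- A superpartition of degree `(n|m)`: strictly decreasing fermionic parts `a` (length `m`,
last part possibly zero) and a weakly decreasing list `s` of positive bosonic parts,
total sum `n`. -/
structure SuperPartition (n m : ℕ) where
  a : Fin m → ℕ
  s : List ℕ
  ha : StrictAnti a
  hs : s.Pairwise (· ≥ ·)
  hpos : ∀ x ∈ s, 0 < x
  hsum : (∑ i, a i) + s.sum = n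

/-- The `i`-th largest element of a multiset of naturals (0 if out of range). -/
def sortDesc (M : Multiset ℕ) (i : ℕ) : ℕ := ((M.sort (· ≤ ·)).reverse).getD i 0

/-- `Λ*`: all parts of `Λ` rearranged in weakly decreasing order. -/
def starFun {n m : ℕ} (L : SuperPartition n m) (i : ℕ) : ℕ :=
  sortDesc (Multiset.map L.a Finset.univ.val + (L.s : Multiset ℕ)) i

/-- `Λ^⊛`: the parts of `Λ^a` increased by one together with the parts of `Λ^s`,
rearranged in weakly decreasing order. -/
def circFun {n m : ℕ} (L : SuperPartition n m) (i : ℕ) : ℕ :=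
  sortDesc (Multiset.map (fun k => L.a k + 1) Finset.univ.val + (L.s : Multiset ℕ)) i

/-- The map `Λ ↦ (Λ*, Λ^⊛)` is injective: two superpartitions `Λ`, `Ω` of degree `(n|m)` are
equal if and only if `Λ* = Ω*` and `Λ^⊛ = Ω^⊛`. -/
lemma SuperPartition.ext' {n m : ℕ} {Λ Ω : SuperPartition n m} (ha : Λ.a = Ω.a)
    (hs : Λ.s = Ω.s) : Λ = Ω := by
  cases Λ; cases Ω; simp_all

lemma sortDesc_eq_of_card (M N : Multiset ℕ) (hc : Multiset.card M = Multiset.card N)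
    (h : ∀ i, sortDesc M i = sortDesc N i) : M = N := by
  have hlen : (M.sort (· ≤ ·)).reverse.length = (N.sort (· ≤ ·)).reverse.length := by
    simp [Multiset.length_sort, hc]
  have hl : (M.sort (· ≤ ·)).reverse = (N.sort (· ≤ ·)).reverse := by
    apply List.ext_getElem hlen
    intro i h1 h2
    have := h i
    simp only [sortDesc] at this
    rwa [List.getD_eq_getElem _ _ h1, List.getD_eq_getElem _ _ h2] at this
  have : M.sort (· ≤ ·) = N.sort (· ≤ ·) := by
    have := congrArg List.reverse hl
    simpa using this
  calc M = ↑(M.sort (· ≤ ·)) := (Multiset.sort_eq _ _).symm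
    _ = ↑(N.sort (· ≤ ·)) := by rw [this]
    _ = N := Multiset.sort_eq _ _

lemma card_eq_of_sortDesc (M N : Multiset ℕ) (hM : ∀ x ∈ M, 0 < x) (hN : ∀ x ∈ N, 0 < x)
    (h : ∀ i, sortDesc M i = sortDesc N i) : Multiset.card M = Multiset.card N := by
  by_contra hne
  -- wlog by symmetry
  have key : ∀ (M N : Multiset ℕ), (∀ x ∈ N, 0 < x) → (∀ i, sortDesc M i = sortDesc N i) →
      Multiset.card M < Multiset.card N → False := by
    intro M N hN h hlt
    have h1 : sortDesc M (Multiset.card M) = 0 := by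
      apply List.getD_eq_default
      simp [Multiset.length_sort]
    have h2 : 0 < sortDesc N (Multiset.card M) := by
      have hlen : Multiset.card M < (N.sort (· ≤ ·)).reverse.length := by
        simp [Multiset.length_sort, hlt]
      unfold sortDesc
      rw [List.getD_eq_getElem _ _ hlen]
      apply hN
      have := List.getElem_mem hlen
      rw [List.mem_reverse] at this
      rwa [Multiset.mem_sort] at this
    rw [h (Multiset.card M)] at h1
    omega
  rcases Nat.lt_or_ge (Multiset.card M) (Multiset.card N) with hlt | hge
  · exact key M N hN h hlt
  · exact key N M hM (fun i => (h i).symm) (by omega)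

lemma map_succ_cancel (A B : Multiset ℕ)
    (h : A.map (fun k => k + 1) + B = B.map (fun k => k + 1) + A) : A = B := by
  have hsucc : Function.Injective (fun k : ℕ => k + 1) := fun a b h => by simpa using h
  have hcount : ∀ x, Multiset.count x A = Multiset.count x B := by
    intro x
    induction x with
    | zero =>
      have := congrArg (Multiset.count 0) h
      have hA : Multiset.count 0 (A.map (fun k => k + 1)) = 0 := by
        simp [Multiset.count_eq_zero, Multiset.mem_map]
      have hB : Multiset.count 0 (B.map (fun k => k + 1)) = 0 := by
        simp [Multiset.count_eq_zero, Multiset.mem_map]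
      simp only [Multiset.count_add, hA, hB] at this
      omega
    | succ x ih =>
      have h' := congrArg (Multiset.count (x + 1)) h
      simp only [Multiset.count_add] at h'
      have e1 : Multiset.count (x + 1) (A.map (fun k => k + 1)) = Multiset.count x A :=
        Multiset.count_map_eq_count' _ A hsucc x
      have e2 : Multiset.count (x + 1) (B.map (fun k => k + 1)) = Multiset.count x B :=
        Multiset.count_map_eq_count' _ B hsucc x
      omega
  exact Multiset.ext.2 hcount

lemma strictAnti_eq_of_map {m : ℕ} (a b : Fin m → ℕ) (ha : StrictAnti a) (hb : StrictAnti b)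
    (h : Multiset.map a Finset.univ.val = Multiset.map b Finset.univ.val) : a = b := by
  have hna : (Multiset.map a Finset.univ.val).Nodup :=
    Finset.univ.nodup.map ha.injective
  set F : Finset ℕ := ⟨Multiset.map a Finset.univ.val, hna⟩ with hF
  have hcard : F.card = m := by
    simp [hF, Finset.card, Multiset.card_map]
  have hmemA : ∀ x : Fin m, (a ∘ Fin.rev) x ∈ F := by
    intro x
    rw [Finset.mem_def]
    exact Multiset.mem_map.2 ⟨x.rev, Finset.mem_def.1 (Finset.mem_univ _), rfl⟩
  have hmemB : ∀ x : Fin m, (b ∘ Fin.rev) x ∈ F := by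
    intro x
    rw [Finset.mem_def]
    show b x.rev ∈ (Multiset.map a Finset.univ.val)
    rw [h]
    exact Multiset.mem_map.2 ⟨x.rev, Finset.mem_def.1 (Finset.mem_univ _), rfl⟩
  have hrev : StrictAnti (Fin.rev : Fin m → Fin m) := fun i j hij => by
    simpa [Fin.rev_lt_rev] using hij
  have hma : StrictMono (a ∘ Fin.rev) := fun i j hij => ha (hrev hij)
  have hmb : StrictMono (b ∘ Fin.rev) := fun i j hij => hb (hrev hij)
  have hab : a ∘ Fin.rev = b ∘ Fin.rev := by
    rw [Finset.orderEmbOfFin_unique hcard hmemA hma,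
      Finset.orderEmbOfFin_unique hcard hmemB hmb]
  funext i
  have := congrFun hab i.rev
  simpa [Fin.rev_rev] using this

/-- The map `Λ ↦ (Λ*, Λ^⊛)` is injective: two superpartitions `Λ`, `Ω` of degree `(n|m)` are
equal if and only if `Λ* = Ω*` and `Λ^⊛ = Ω^⊛`. -/
theorem superPartition_star_circ_injective (n m : ℕ) (Λ Ω : SuperPartition n m) :
    Λ = Ω ↔ (∀ i, starFun Λ i = starFun Ω i) ∧ (∀ i, circFun Λ i = circFun Ω i) := by
  constructor
  · rintro rfl; exact ⟨fun _ => rfl, fun _ => rfl⟩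
  rintro ⟨hstar, hcirc⟩
  set A := Multiset.map Λ.a Finset.univ.val with hA
  set B := Multiset.map Ω.a Finset.univ.val with hB
  set S : Multiset ℕ := ↑Λ.s with hS
  set T : Multiset ℕ := ↑Ω.s with hT
  set A1 := Multiset.map (fun k => Λ.a k + 1) Finset.univ.val with hA1
  set B1 := Multiset.map (fun k => Ω.a k + 1) Finset.univ.val with hB1
  have hA1' : A1 = A.map (fun k => k + 1) := by
    rw [hA1, hA, Multiset.map_map]; rfl
  have hB1' : B1 = B.map (fun k => k + 1) := by
    rw [hB1, hB, Multiset.map_map]; rfl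
  -- circ multisets are equal
  have hposC1 : ∀ x ∈ A1 + S, 0 < x := by
    intro x hx
    rcases Multiset.mem_add.1 hx with hx | hx
    · rw [hA1'] at hx
      rcases Multiset.mem_map.1 hx with ⟨y, _, rfl⟩; omega
    · exact Λ.hpos x (by simpa [hS] using hx)
  have hposC2 : ∀ x ∈ B1 + T, 0 < x := by
    intro x hx
    rcases Multiset.mem_add.1 hx with hx | hx
    · rw [hB1'] at hx
      rcases Multiset.mem_map.1 hx with ⟨y, _, rfl⟩; omega
    · exact Ω.hpos x (by simpa [hT] using hx)
  have hcircM : A1 + S = B1 + T := by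
    apply sortDesc_eq_of_card _ _ (card_eq_of_sortDesc _ _ hposC1 hposC2 hcirc) hcirc
  -- cardinalities for star
  have hcardST : Multiset.card S = Multiset.card T := by
    have := congrArg Multiset.card hcircM
    simp [hA1, hB1, Multiset.card_add, Multiset.card_map] at this
    omega
  have hstarM : A + S = B + T := by
    apply sortDesc_eq_of_card _ _ _ hstar
    simp only [Multiset.card_add]
    simpa [hA, hB, hS, hT, Multiset.card_map] using hcardST
  -- cancellation: A1 + B = B1 + A
  have hkey : A.map (fun k => k + 1) + B = B.map (fun k => k + 1) + A := by
    rw [← hA1', ← hB1']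
    have : A1 + B + T = B1 + A + T := by
      calc A1 + B + T = A1 + (B + T) := by rw [add_assoc]
        _ = A1 + (A + S) := by rw [← hstarM]
        _ = A + (A1 + S) := by rw [add_left_comm]
        _ = A + (B1 + T) := by rw [hcircM]
        _ = B1 + A + T := by rw [add_left_comm, add_assoc]
    exact add_right_cancel this
  have hAB : A = B := map_succ_cancel A B hkey
  have ha : Λ.a = Ω.a := strictAnti_eq_of_map _ _ Λ.ha Ω.ha (by rw [← hA, ← hB, hAB])
  have hST : S = T := by
    rw [hAB] at hstarM
    exact add_left_cancel hstarM
  have hs : Λ.s = Ω.s := by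
    have hperm : List.Perm Λ.s Ω.s := Multiset.coe_eq_coe.1 hST
    exact List.Perm.eq_of_pairwise' Λ.hs Ω.hs hperm
  exact SuperPartition.ext' ha hs
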